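/- arXiv:1406.0786 — 2 statements merged into one kernel-verified Lean document; each statement's English description precedes it below -/
import Mathlib

section
/- Let $f : [p] \to [q]$ be a function and let $v = v_1 \otimes v_2 \otimes \cdots \otimes v_q \in \bigotimes^q \mathbb{Q}[q]$, identified with an element of $\mathbb{Q}\mathcal{F}([q],[q])$ (formal linear combinations of functions $[q] \to [q]$) via one-line notation. If $f$ does not hit $m \in [q]$ in its image, and if $v_m$ has coefficient-sum zero, then the composition $fv = 0$ in $\mathbb{Q}\mathcal{F}([p],[q])$. -/
/-- The identification of `⨂^q ℚ[q]` with `ℚ F([q],[q])` via one-line notation: the pure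
tensor `v_1 ⊗ ⋯ ⊗ v_q` corresponds to the formal linear combination whose coefficient at
a function `g : [q] → [q]` is `∏ i, v_i (g i)`. -/
noncomputable def tensorExpand (q : ℕ) (v : Fin q → Fin q → ℚ) : (Fin q → Fin q) →₀ ℚ :=
  Finsupp.equivFunOnFinite.symm (fun g => ∏ i, v i (g i))

/-- If `f : [p] → [q]` misses the value `m`, and the `m`-th tensor factor of
`v = v_1 ⊗ ⋯ ⊗ v_q` has coefficient-sum zero, then the composite `f v` (precomposition
with `f`, extended linearly) vanishes in `ℚ F([p],[q])`. -/
theorem missed_factor_kills (p q : ℕ) (f : Fin p → Fin q) (v : Fin q → Fin q → ℚ)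
    (m : Fin q) (hm : m ∉ Set.range f) (hsum : ∑ j, v m j = 0) :
    Finsupp.lmapDomain ℚ ℚ (fun g : Fin q → Fin q => g ∘ f) (tensorExpand q v) = 0 := by
  classical
  have hm' : ∀ x, f x ≠ m := fun x hx => hm ⟨x, hx⟩
  ext h
  rw [Finsupp.lmapDomain_apply, Finsupp.mapDomain, Finsupp.sum_apply,
      Finsupp.sum_fintype _ _ (fun g => by simp)]
  simp only [Finsupp.single_apply, tensorExpand,
    Finsupp.coe_equivFunOnFinite_symm, Finsupp.coe_zero, Pi.zero_apply]
  set e := Equiv.funSplitAt m (Fin q) with he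
  rw [← e.symm.sum_comp (fun g => if g ∘ f = h then ∏ i, v i (g i) else 0)]
  rw [Fintype.sum_prod_type, Finset.sum_comm]
  apply Finset.sum_eq_zero
  intro g' _
  have hcond : ∀ j, (e.symm (j, g')) ∘ f = fun x => g' ⟨f x, hm' x⟩ := by
    intro j; funext x
    simp [he, Equiv.funSplitAt, Equiv.piSplitAt, hm' x]
  have hprod : ∀ j, ∏ i, v i (e.symm (j, g') i)
      = v m j * ∏ i : {i // i ≠ m}, v i (g' i) := by
    intro j
    rw [← Finset.mul_prod_erase Finset.univ _ (Finset.mem_univ m),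
        Finset.prod_subtype (p := fun i => i ≠ m) (Finset.univ.erase m) (by simp)
          (fun i => v i (e.symm (j, g') i))]
    congr 1
    · congr 1
      simp [he, Equiv.funSplitAt, Equiv.piSplitAt]
    · exact Finset.prod_congr rfl fun i _ => by
        simp [he, Equiv.funSplitAt, Equiv.piSplitAt, i.2]
  simp only [hcond, hprod]
  by_cases hC : (fun x => g' ⟨f x, hm' x⟩) = h
  · simp [hC, ← Finset.sum_mul, hsum]
  · simp [hC]
end

section
/- For $k \geq 1$, define $\mu = (e_1 - e_2) \otimes (e_2 - e_1) \otimes (e_3 - e_2) \otimes (e_4 - e_3) \otimes \cdots \otimes (e_{k+1} - e_k) \in \bigotimes^{k+1}\mathbb{Q}[k+1]$, identified with an element of $\mathbb{Q}\mathcal{F}([k+1],[k+1])$. Then (a) the image of $\mu$ under the quotient map $\mathbb{Q}\mathcal{F}([k+1],[k+1]) \to \mathbb{Q}\mathcal{S}_{k+1}$ killing non-bijections is $1 + (1\;2)$, and (b) for every function $f : [k] \to [k+1]$, $f\mu = 0$. -/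
/-- The factors of `μ = (e_1 - e_2) ⊗ (e_2 - e_1) ⊗ (e_3 - e_2) ⊗ ⋯ ⊗ (e_{k+1} - e_k)`,
written 0-indexed: factor `0` is `e_0 - e_1`, factor `1` is `e_1 - e_0`, and factor
`i ≥ 2` is `e_i - e_{i-1}`. -/
def muFactor (k : ℕ) : Fin (k + 1) → Fin (k + 1) → ℚ := fun i j =>
  if (i : ℕ) = 0 then (if (j : ℕ) = 0 then 1 else 0) - (if (j : ℕ) = 1 then 1 else 0)
  else if (i : ℕ) = 1 then (if (j : ℕ) = 1 then 1 else 0) - (if (j : ℕ) = 0 then 1 else 0)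
  else (if j = i then 1 else 0) - (if (j : ℕ) + 1 = (i : ℕ) then 1 else 0)

lemma muFactor_row (k : ℕ) (hk : 1 ≤ k) (m : Fin (k + 1)) :
    ∃ a b : Fin (k + 1), a ≠ b ∧
      ∀ j, muFactor k m j = (if j = a then 1 else 0) - (if j = b then 1 else 0) := by
  have hv1 : ((1 : Fin (k + 1)) : ℕ) = 1 := by rw [Fin.val_one']; exact Nat.mod_eq_of_lt (by omega)
  rcases Nat.lt_or_ge (m : ℕ) 2 with hm | hm
  · rcases Nat.lt_or_ge (m : ℕ) 1 with hm0 | hm1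
    · refine ⟨0, 1, ?_, ?_⟩
      · simp only [ne_eq, Fin.ext_iff, Fin.val_zero, hv1]; omega
      · intro j
        simp only [muFactor, Fin.ext_iff, hv1, Fin.val_zero]
        split_ifs <;> first | (exfalso; omega) | norm_num
    · refine ⟨1, 0, ?_, ?_⟩
      · simp only [ne_eq, Fin.ext_iff, Fin.val_zero, hv1]; omega
      · intro j
        simp only [muFactor, Fin.ext_iff, hv1, Fin.val_zero]
        split_ifs <;> first | (exfalso; omega) | norm_num
  · refine ⟨m, ⟨(m : ℕ) - 1, by omega⟩, ?_, ?_⟩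
    · simp only [ne_eq, Fin.ext_iff]; omega
    · intro j
      simp only [muFactor, Fin.ext_iff]
      split_ifs <;> first | (exfalso; omega) | norm_num

lemma row_swap {n : ℕ} (r : Fin n → ℚ) (a b : Fin n) (hab : a ≠ b)
    (hr : ∀ j, r j = (if j = a then 1 else 0) - (if j = b then 1 else 0)) (j : Fin n) :
    r (Equiv.swap a b j) = - r j := by
  rcases eq_or_ne j a with rfl | hja
  · rw [Equiv.swap_apply_left, hr, hr]; simp [hab, hab.symm]
  rcases eq_or_ne j b with rfl | hjb
  · rw [Equiv.swap_apply_right, hr, hr]; simp [hab, hab.symm]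
  · rw [Equiv.swap_apply_of_ne_of_ne hja hjb, hr]; simp [hja, hjb]


lemma muFactor_diag (k : ℕ) (i : Fin (k + 1)) : muFactor k i i = 1 := by
  simp only [muFactor, Fin.ext_iff]
  split_ifs <;> first | (exfalso; omega) | norm_num


/-- For `k ≥ 1`: (a) the image of `μ` in `ℚ S_{k+1}` under killing the non-bijections is
`1 + (1 2)`, expressed by saying that the coefficient of `μ` at any bijective `g` matches
the corresponding coefficient of `1 + (1 2)`; and (b) `μ` annihilates every function
`f : [k] → [k+1]` under precomposition. -/
theorem lower_squisher_properties (k : ℕ) (hk : 1 ≤ k) :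
    (∀ g : Fin (k + 1) → Fin (k + 1), Function.Bijective g →
      (tensorExpand (k + 1) (muFactor k)) g =
        (if g = id then (1 : ℚ) else 0) +
          (if g = ⇑(Equiv.swap (0 : Fin (k + 1)) 1) then 1 else 0)) ∧
    (∀ f : Fin k → Fin (k + 1),
      Finsupp.lmapDomain ℚ ℚ (fun g : Fin (k + 1) → Fin (k + 1) => g ∘ f)
        (tensorExpand (k + 1) (muFactor k)) = 0) := by
  classical
  have hv1 : ((1 : Fin (k + 1)) : ℕ) = 1 := by
    rw [Fin.val_one']; exact Nat.mod_eq_of_lt (by omega)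
  have h01 : (0 : Fin (k + 1)) ≠ 1 := by
    simp only [ne_eq, Fin.ext_iff, Fin.val_zero, hv1]; omega
  have hte : ∀ g : Fin (k + 1) → Fin (k + 1),
      (tensorExpand (k + 1) (muFactor k)) g = ∏ i, muFactor k i (g i) := fun _ => rfl
  constructor
  · intro g hg
    rw [hte]
    by_cases hid : g = id
    · subst hid
      have hp : ∏ i, muFactor k i (id i) = 1 := Finset.prod_eq_one fun i _ => muFactor_diag k i
      rw [hp, if_pos rfl, if_neg, add_zero]
      intro h
      have := congrFun h 0
      rw [Equiv.swap_apply_left] at this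
      exact h01 this
    · by_cases hsw : g = ⇑(Equiv.swap (0 : Fin (k + 1)) 1)
      · subst hsw
        rw [if_neg hid, if_pos rfl, zero_add]
        set t : Fin (k + 1) → ℚ := fun i => muFactor k i (Equiv.swap (0 : Fin (k + 1)) 1 i)
          with ht
        have h1mem : (1 : Fin (k + 1)) ∈ (Finset.univ : Finset (Fin (k + 1))).erase 0 :=
          Finset.mem_erase.2 ⟨fun h => h01 h.symm, Finset.mem_univ _⟩
        rw [← Finset.mul_prod_erase Finset.univ t (Finset.mem_univ 0),
          ← Finset.mul_prod_erase _ t h1mem]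
        have ht0 : t 0 = -1 := by
          simp only [ht, Equiv.swap_apply_left, muFactor, Fin.val_zero, hv1]
          norm_num
        have ht1 : t 1 = -1 := by
          simp only [ht, Equiv.swap_apply_right, muFactor, Fin.val_zero, hv1]
          norm_num
        rw [ht0, ht1, Finset.prod_eq_one]
        · norm_num
        · intro i hi
          simp only [Finset.mem_erase] at hi
          obtain ⟨hi1, hi0, -⟩ := hi
          show muFactor k i (Equiv.swap (0 : Fin (k + 1)) 1 i) = 1
          rw [Equiv.swap_apply_of_ne_of_ne hi0 hi1, muFactor_diag]
      · rw [if_neg hid, if_neg hsw, add_zero]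
        by_cases hz : ∃ i, muFactor k i (g i) = 0
        · obtain ⟨i, hi⟩ := hz
          exact Finset.prod_eq_zero (Finset.mem_univ i) hi
        · exfalso
          push_neg at hz
          have hlow : ∀ i : Fin (k + 1), (i : ℕ) ≤ 1 → (g i : ℕ) ≤ 1 := by
            intro i hi
            have h := hz i
            by_contra hc
            push_neg at hc
            apply h
            simp only [muFactor, Fin.ext_iff]
            split_ifs <;> first | (exfalso; omega) | norm_num
          have hv : ∀ i : Fin (k + 1), 2 ≤ (i : ℕ) →
              (g i : ℕ) = (i : ℕ) ∨ (g i : ℕ) + 1 = (i : ℕ) := by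
            intro i hi
            have h := hz i
            by_contra hc
            push_neg at hc
            apply h
            simp only [muFactor, Fin.ext_iff]
            split_ifs <;> first | (exfalso; omega) | norm_num
          have key : ∀ m : ℕ, ∀ i : Fin (k + 1), k + 1 - (i : ℕ) ≤ m → 2 ≤ (i : ℕ) →
              (g i : ℕ) = (i : ℕ) := by
            intro m
            induction m with
            | zero => intro i h1 h2; exfalso; have := i.isLt; omega
            | succ n ih =>
              intro i h1 h2
              rcases hv i h2 with h | h
              · exact h
              · exfalso
                obtain ⟨j, hj⟩ := hg.surjective i
                have hjv : (g j : ℕ) = (i : ℕ) := congrArg Fin.val hj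
                rcases Nat.lt_or_ge (j : ℕ) 2 with hj2 | hj2
                · have := hlow j (by omega); omega
                · rcases hv j hj2 with h' | h'
                  · have hji : j = i := Fin.ext (by omega)
                    rw [hji] at hjv
                    omega
                  · have := ih j (by omega) (by omega)
                    omega
          have key2 : ∀ i : Fin (k + 1), 2 ≤ (i : ℕ) → g i = i :=
            fun i hi => Fin.ext (key (k + 1) i (by omega) hi)
          have h0 := hlow 0 (by simp)
          have h1 := hlow 1 (le_of_eq hv1)
          have h0' : (g 0 : ℕ) = 0 ∨ (g 0 : ℕ) = 1 := by omega
          have h1' : (g 1 : ℕ) = 0 ∨ (g 1 : ℕ) = 1 := by omega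
          rcases h0' with h0' | h0' <;> rcases h1' with h1' | h1'
          · exact h01 (hg.injective (show g 0 = g 1 from Fin.ext (by omega)))
          · apply hid
            funext i
            rcases Nat.lt_or_ge (i : ℕ) 2 with hi2 | hi2
            · rcases Nat.lt_or_ge (i : ℕ) 1 with hi0 | hi1
              · have : i = 0 := Fin.ext (by rw [Fin.val_zero]; omega)
                subst this
                exact Fin.ext (by simpa using h0')
              · have : i = 1 := Fin.ext (by rw [hv1]; omega)
                subst this
                exact Fin.ext (by simp only [id_eq, hv1]; exact h1')
            · exact key2 i hi2
          · apply hsw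
            funext i
            rcases Nat.lt_or_ge (i : ℕ) 2 with hi2 | hi2
            · rcases Nat.lt_or_ge (i : ℕ) 1 with hi0 | hi1
              · have : i = 0 := Fin.ext (by rw [Fin.val_zero]; omega)
                subst this
                rw [Equiv.swap_apply_left]
                exact Fin.ext (by rw [hv1]; exact h0')
              · have : i = 1 := Fin.ext (by rw [hv1]; omega)
                subst this
                rw [Equiv.swap_apply_right]
                exact Fin.ext (by simpa using h1')
            · rw [Equiv.swap_apply_of_ne_of_ne, key2 i hi2]
              · exact fun h => by rw [h] at hi2; simp at hi2
              · exact fun h => by rw [h, hv1] at hi2; omega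
          · exact h01 (hg.injective (show g 0 = g 1 from Fin.ext (by omega)))
  · intro f
    rw [Finsupp.lmapDomain_apply, Finsupp.mapDomain,
      Finsupp.sum_fintype _ _ (fun _ => Finsupp.single_zero _)]
    ext h
    rw [Finsupp.finset_sum_apply]
    have hns : ¬ Function.Surjective f := by
      intro hs
      have := Fintype.card_le_of_surjective f hs
      simp only [Fintype.card_fin] at this
      omega
    unfold Function.Surjective at hns
    push_neg at hns
    obtain ⟨m, hm⟩ := hns
    obtain ⟨a, b, hab, hrow⟩ := muFactor_row k hk m
    have hsgl : ∀ g : Fin (k + 1) → Fin (k + 1),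
        (Finsupp.single (g ∘ f) ((tensorExpand (k + 1) (muFactor k)) g)) h =
          if g ∘ f = h then ∏ i, muFactor k i (g i) else 0 := by
      intro g
      rw [Finsupp.single_apply, hte]
    simp only [hsgl, Finsupp.coe_zero, Pi.zero_apply]
    refine Finset.sum_ninvolution
      (fun g => Function.update g m (Equiv.swap a b (g m))) ?_ ?_ (fun _ => Finset.mem_univ _) ?_
    · intro g
      have hcomp : Function.update g m (Equiv.swap a b (g m)) ∘ f = g ∘ f := by
        funext x
        simp only [Function.comp_apply]
        exact Function.update_of_ne (hm x) _ g
      by_cases hc : g ∘ f = h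
      · rw [if_pos hc, if_pos (hcomp.trans hc)]
        have hprod : ∏ i, muFactor k i (Function.update g m (Equiv.swap a b (g m)) i) =
            - ∏ i, muFactor k i (g i) := by
          rw [← Finset.mul_prod_erase Finset.univ _ (Finset.mem_univ m),
            ← Finset.mul_prod_erase Finset.univ (fun i => muFactor k i (g i))
              (Finset.mem_univ m)]
          rw [Function.update_self, row_swap (muFactor k m) a b hab hrow]
          rw [Finset.prod_congr rfl fun i hi => by
            rw [Function.update_of_ne (Finset.mem_erase.1 hi).1]]
          ring
        rw [hprod]; ring
      · rw [if_neg hc, if_neg (by rw [hcomp]; exact hc), add_zero]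
    · intro g hne
      have hc : g ∘ f = h ∧ (∏ i, muFactor k i (g i)) ≠ 0 := by
        by_cases hc : g ∘ f = h
        · exact ⟨hc, by rw [if_pos hc] at hne; exact hne⟩
        · exact absurd (if_neg hc) hne
      have hgm : muFactor k m (g m) ≠ 0 := by
        intro h0
        exact hc.2 (Finset.prod_eq_zero (Finset.mem_univ m) h0)
      have : Equiv.swap a b (g m) ≠ g m := by
        rw [hrow] at hgm
        rcases eq_or_ne (g m) a with rfl | hga
        · rw [Equiv.swap_apply_left]; exact fun h => hab h.symm
        rcases eq_or_ne (g m) b with rfl | hgb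
        · rw [Equiv.swap_apply_right]; exact hab
        · exfalso; apply hgm; simp [hga, hgb]
      intro heq
      exact this (by simpa using congrFun heq m)
    · intro g
      funext i
      beta_reduce
      rcases eq_or_ne i m with rfl | him
      · rw [Function.update_self, Function.update_self, Equiv.swap_apply_self]
      · rw [Function.update_of_ne him, Function.update_of_ne him]
end
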